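/- Concavity of the tradeoff functions (Lemma 3.8): For each i ∈ {1,…,k+1}, the function ĥ_i : ℝ → ℝ ∪ {−∞} is concave (as an extended-real-valued function). -/

import Mathlib

/-!
Lemma 3.8 (concavity of the cumulative tradeoff functions `ĥ_i`): for each
`i ∈ {1, …, k+1}` (here 0-indexed: `i ∈ {0, …, k}`), the function
`ĥ_i : ℝ → ℝ ∪ {-∞}` is concave.

`ĥ_{k+1}(c) = 0` for `c ≥ 0` and `-∞` otherwise; recursively, `ĥ_i(c)` is the
optimal value of maximizing `E_{v∼f_i}[ĥ_{i+1}(v x(v) - p(v))] + c + p(0)`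
over IC single-period mechanisms `(x, p)` with allocation in `[0,1]` and
expected utility exactly `c`.
-/

open MeasureTheory

namespace Stmt6

open scoped Classical

variable {k : ℕ}

/-- The extended-real-valued objective
`E_{v∼μ}[g(v x(v) - p(v))] + c + p(0)` of the problem defining `ĥ_i(c)`,
with value `⊥` when the tradeoff term is not a.e. finite and integrable. -/
noncomputable def hObj (μ : Measure ℝ) (g : ℝ → EReal) (c : ℝ) (x p : ℝ → ℝ) : EReal :=
  if (∀ᵐ v ∂μ, ⊥ < g (v * x v - p v) ∧ g (v * x v - p v) < ⊤)
      ∧ Integrable (fun v => (g (v * x v - p v)).toReal) μ then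
    ((∫ v, (g (v * x v - p v)).toReal ∂μ + c + p 0 : ℝ) : EReal)
  else ⊥

/-- The optimal value of the problem defining `ĥ_i(c)` with value distribution
`μ` and continuation tradeoff function `g`. -/
noncomputable def hStep (μ : Measure ℝ) (g : ℝ → EReal) (c : ℝ) : EReal :=
  sSup {r : EReal | ∃ x p : ℝ → ℝ, (∀ v, x v ∈ Set.Icc (0 : ℝ) 1) ∧
    (∀ v v', v * x v' - p v' ≤ v * x v - p v) ∧
    (∫ v, (v * x v - p v) ∂μ) = c ∧ r = hObj μ g c x p}

/-- Auxiliary downward recursion: `hHatAux μ m` is the tradeoff function of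
(0-indexed) period `k - m`. -/
noncomputable def hHatAux (μ : Fin k → Measure ℝ) : ℕ → ℝ → EReal
  | 0 => fun c => if 0 ≤ c then (0 : EReal) else ⊥
  | (m + 1) => fun c =>
      if hm : m < k then
        hStep (μ ⟨k - (m + 1), by omega⟩) (hHatAux μ m) c
      else ⊥

/-- The cumulative tradeoff function `ĥ` of (0-indexed) period `i`;
`hHat μ k` is the terminal function. -/
noncomputable def hHat (μ : Fin k → Measure ℝ) (i : ℕ) : ℝ → EReal :=
  hHatAux μ (k - i)

end Stmt6

namespace Stmt6Proof
open MeasureTheory Stmt6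

/-! ### EReal helpers -/

lemma ereal_inv_cancel {a : ℝ} (ha : 0 < a) (r : EReal) :
    ((a⁻¹ : ℝ) : EReal) * ((a : EReal) * r) = r := by
  rw [← mul_assoc, ← EReal.coe_mul, inv_mul_cancel₀ ha.ne', EReal.coe_one, one_mul]

lemma lt_mul_sSup {a : ℝ} (ha : 0 < a) {S : Set EReal} {x : EReal}
    (hx : x < (a : EReal) * sSup S) : ∃ r ∈ S, x < (a : EReal) * r := by
  by_contra hcon
  push_neg at hcon
  have hS : sSup S ≤ ((a⁻¹ : ℝ) : EReal) * x := by
    refine sSup_le fun r hr => ?_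
    calc r = ((a⁻¹ : ℝ) : EReal) * ((a : EReal) * r) := (ereal_inv_cancel ha r).symm
    _ ≤ ((a⁻¹ : ℝ) : EReal) * x :=
        mul_le_mul_of_nonneg_left (hcon r hr) (by exact_mod_cast (inv_nonneg.2 ha.le))
  have h2 : (a : EReal) * sSup S ≤ x := by
    calc (a : EReal) * sSup S ≤ (a : EReal) * (((a⁻¹ : ℝ) : EReal) * x) :=
        mul_le_mul_of_nonneg_left hS (by exact_mod_cast ha.le)
    _ = x := by rw [← mul_assoc, ← EReal.coe_mul, mul_inv_cancel₀ ha.ne', EReal.coe_one, one_mul]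
  exact absurd hx (not_lt.2 h2)

/-! ### Concavity predicate -/

def Conc (g : ℝ → EReal) : Prop := ∀ c₁ c₂ a b : ℝ, 0 ≤ a → 0 ≤ b → a + b = 1 →
  (a : EReal) * g c₁ + (b : EReal) * g c₂ ≤ g (a * c₁ + b * c₂)

lemma conc_of_pos {g : ℝ → EReal}
    (H : ∀ c₁ c₂ a b : ℝ, 0 < a → 0 < b → a + b = 1 →
      (a : EReal) * g c₁ + (b : EReal) * g c₂ ≤ g (a * c₁ + b * c₂)) : Conc g := by
  intro c₁ c₂ a b ha hb hab
  rcases ha.eq_or_lt with rfl | ha'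
  · have hb1 : b = 1 := by linarith
    subst hb1; simp
  rcases hb.eq_or_lt with rfl | hb'
  · have ha1 : a = 1 := by linarith
    subst ha1; simp
  exact H c₁ c₂ a b ha' hb' hab

open scoped Classical in
lemma conc_base : Conc (fun c => if 0 ≤ c then (0 : EReal) else ⊥) := by
  refine conc_of_pos fun c₁ c₂ a b ha hb hab => ?_
  by_cases h1 : 0 ≤ c₁
  · by_cases h2 : 0 ≤ c₂
    · have : 0 ≤ a * c₁ + b * c₂ := by positivity
      simp [h1, h2, this]
    · simp only [h1, if_true, h2, if_false]
      rw [EReal.coe_mul_bot_of_pos (by exact_mod_cast hb), EReal.add_bot]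
      exact bot_le
  · simp only [h1, if_false]
    rw [EReal.coe_mul_bot_of_pos (by exact_mod_cast ha), EReal.bot_add]
    exact bot_le

/-! ### Measurability of the real trace of a concave `EReal` function -/

lemma conc_measurable {g : ℝ → EReal} (hg : Conc g) (htop : ∀ c, g c < ⊤) :
    Measurable (fun c => (g c).toReal) := by
  classical
  set D : Set ℝ := {c | ⊥ < g c} with hD
  have hDconv : Convex ℝ D := by
    intro c₁ h₁ c₂ h₂ a b ha hb hab
    have := hg c₁ c₂ a b ha hb hab
    simp only [smul_eq_mul]
    refine Set.mem_setOf.2 (lt_of_lt_of_le ?_ this)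
    have e₁ : g c₁ = ((g c₁).toReal : EReal) := (EReal.coe_toReal (htop c₁).ne h₁.ne').symm
    have e₂ : g c₂ = ((g c₂).toReal : EReal) := (EReal.coe_toReal (htop c₂).ne h₂.ne').symm
    rw [e₁, e₂, ← EReal.coe_mul, ← EReal.coe_mul, ← EReal.coe_add]
    exact bot_lt_iff_ne_bot.2 (EReal.coe_ne_bot _)
  set F : ℝ → ℝ := fun c => (g c).toReal with hF
  have hFconc : ConcaveOn ℝ D F := by
    refine ⟨hDconv, fun c₁ h₁ c₂ h₂ a b ha hb hab => ?_⟩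
    have key := hg c₁ c₂ a b ha hb hab
    have hmem : a • c₁ + b • c₂ ∈ D := hDconv h₁ h₂ ha hb hab
    have e₁ : g c₁ = ((F c₁ : ℝ) : EReal) := (EReal.coe_toReal (htop c₁).ne h₁.ne').symm
    have e₂ : g c₂ = ((F c₂ : ℝ) : EReal) := (EReal.coe_toReal (htop c₂).ne h₂.ne').symm
    have e₃ : g (a • c₁ + b • c₂) = ((F (a • c₁ + b • c₂) : ℝ) : EReal) :=
      (EReal.coe_toReal (htop _).ne hmem.ne').symm
    rw [e₁, e₂] at key
    simp only [smul_eq_mul] at key e₃ ⊢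
    rw [e₃, ← EReal.coe_mul, ← EReal.coe_mul, ← EReal.coe_add] at key
    exact_mod_cast key
  set E : Set ℝ := D \ interior D with hE
  have hEcnt : E.Countable := by
    set L : Set ℝ := {c | c ∈ D ∧ ∀ x ∈ D, c ≤ x} with hL
    set U : Set ℝ := {c | c ∈ D ∧ ∀ x ∈ D, x ≤ c} with hU
    have hsub : E ⊆ L ∪ U := by
      rintro c ⟨hcD, hci⟩
      by_contra hc
      have hcL : c ∉ L := fun h => hc (Or.inl h)
      have hcU : c ∉ U := fun h => hc (Or.inr h)
      obtain ⟨x, hxD, hxc⟩ : ∃ x ∈ D, x < c := by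
        rw [hL] at hcL
        simp only [Set.mem_setOf_eq, not_and, not_forall, not_le] at hcL
        obtain ⟨x, hx1, hx2⟩ := hcL hcD
        exact ⟨x, hx1, hx2⟩
      obtain ⟨y, hyD, hcy⟩ : ∃ y ∈ D, c < y := by
        rw [hU] at hcU
        simp only [Set.mem_setOf_eq, not_and, not_forall, not_le] at hcU
        obtain ⟨y, hy1, hy2⟩ := hcU hcD
        exact ⟨y, hy1, hy2⟩
      exact hci (mem_interior.2 ⟨Set.Ioo x y,
        Set.Ioo_subset_Icc_self.trans (hDconv.ordConnected.out hxD hyD),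
        isOpen_Ioo, ⟨hxc, hcy⟩⟩)
    have hLs : L.Subsingleton := fun c hc c' hc' => le_antisymm (hc.2 c' hc'.1) (hc'.2 c hc.1)
    have hUs : U.Subsingleton := fun c hc c' hc' => le_antisymm (hc'.2 c hc.1) (hc.2 c' hc'.1)
    exact (hLs.countable.union hUs.countable).mono hsub
  have hFE : Measurable (fun c => if c ∈ E then F c else 0) := by
    intro t ht
    by_cases h0 : (0 : ℝ) ∈ t
    · have : (fun c => if c ∈ E then F c else 0) ⁻¹' t = (E ∩ F ⁻¹' t) ∪ Eᶜ := by
        ext c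
        by_cases hcE : c ∈ E <;> simp [hcE, h0]
      rw [this]
      exact ((hEcnt.mono Set.inter_subset_left).measurableSet).union
        hEcnt.measurableSet.compl
    · have : (fun c => if c ∈ E then F c else 0) ⁻¹' t = E ∩ F ⁻¹' t := by
        ext c
        by_cases hcE : c ∈ E <;> simp [hcE, h0]
      rw [this]
      exact (hEcnt.mono Set.inter_subset_left).measurableSet
  have hFint : Measurable ((interior D).piecewise F (fun _ => (0 : ℝ))) := by
    refine ContinuousOn.measurable_piecewise ?_ continuousOn_const isOpen_interior.measurableSet
    exact hFconc.continuousOn_interior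
  have hdecomp : F = fun c => (interior D).piecewise F (fun _ => (0 : ℝ)) c
      + (if c ∈ E then F c else 0) := by
    funext c
    by_cases hci : c ∈ interior D
    · have hcE : c ∉ E := fun h => h.2 hci
      simp [Set.piecewise, hci, hcE]
    · by_cases hcD : c ∈ D
      · have hcE : c ∈ E := ⟨hcD, hci⟩
        simp [Set.piecewise, hci, hcE]
      · have hcE : c ∉ E := fun h => hcD h.1
        have : g c = ⊥ := by
          by_contra h
          exact hcD (bot_lt_iff_ne_bot.2 h)
        simp [Set.piecewise, hci, hcE, hF, this]
  rw [hF] at hdecomp ⊢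
  rw [hdecomp]
  exact hFint.add hFE

/-! ### Utility function of an IC mechanism -/

section Mech
variable {ν : Measure ℝ} [IsProbabilityMeasure ν] {hi : ℝ} {x p : ℝ → ℝ}

lemma util_key (IC : ∀ v v', v * x v' - p v' ≤ v * x v - p v) (v w : ℝ) :
    (v * x v - p v) - (w * x w - p w) ≤ (v - w) * x v := by
  nlinarith [IC w v]

lemma util_lipschitz (hx : ∀ v, x v ∈ Set.Icc (0:ℝ) 1)
    (IC : ∀ v v', v * x v' - p v' ≤ v * x v - p v) :
    LipschitzWith 1 (fun v => v * x v - p v) := by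
  refine LipschitzWith.of_dist_le_mul fun v w => ?_
  rw [Real.dist_eq, Real.dist_eq, NNReal.coe_one, one_mul]
  rw [abs_sub_le_iff]
  constructor
  · nlinarith [util_key IC v w, (hx v).1, (hx v).2, le_abs_self (v - w), neg_abs_le (v - w)]
  · nlinarith [util_key IC w v, (hx w).1, (hx w).2, le_abs_self (w - v), neg_abs_le (w - v),
      abs_sub_comm v w]

lemma util_integrable (hhi : 0 ≤ hi) (hsupp : ∀ᵐ v ∂ν, v ∈ Set.Icc (0:ℝ) hi)
    (hx : ∀ v, x v ∈ Set.Icc (0:ℝ) 1)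
    (IC : ∀ v v', v * x v' - p v' ≤ v * x v - p v) :
    Integrable (fun v => v * x v - p v) ν := by
  set u : ℝ → ℝ := fun v => v * x v - p v with hu
  have hlip := util_lipschitz hx IC
  refine Integrable.mono' (integrable_const (|u 0| + hi))
    hlip.continuous.aestronglyMeasurable ?_
  filter_upwards [hsupp] with v hv
  have h1 : |u v - u 0| ≤ |v - 0| := by
    have := hlip.dist_le_mul v 0
    rwa [Real.dist_eq, Real.dist_eq, NNReal.coe_one, one_mul] at this
  rw [Real.norm_eq_abs]
  have : |v - 0| ≤ hi := by rw [sub_zero, abs_of_nonneg hv.1]; exact hv.2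
  calc |u v| ≤ |u 0| + |u v - u 0| := by
        nlinarith [abs_sub_abs_le_abs_sub (u v) (u 0)]
  _ ≤ |u 0| + hi := by linarith

lemma util_zero_ge (hhi : 0 ≤ hi) (hsupp : ∀ᵐ v ∂ν, v ∈ Set.Icc (0:ℝ) hi)
    (hx : ∀ v, x v ∈ Set.Icc (0:ℝ) 1)
    (IC : ∀ v v', v * x v' - p v' ≤ v * x v - p v) :
    (∫ v, (v * x v - p v) ∂ν) - hi ≤ 0 * x 0 - p 0 := by
  set u : ℝ → ℝ := fun v => v * x v - p v with hu
  have hlip := util_lipschitz hx IC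
  have hint := util_integrable hhi hsupp hx IC
  have hb : ∀ᵐ v ∂ν, u v ≤ u 0 + hi := by
    filter_upwards [hsupp] with v hv
    have := hlip.dist_le_mul v 0
    rw [Real.dist_eq, Real.dist_eq, NNReal.coe_one, one_mul, sub_zero,
      abs_of_nonneg hv.1] at this
    have h2 : |u v - u 0| ≤ hi := this.trans hv.2
    nlinarith [le_abs_self (u v - u 0)]
  have h3 := integral_mono_ae hint (integrable_const (u 0 + hi)) hb
  rw [integral_const] at h3
  simp only [measure_univ, probReal_univ, ENNReal.toReal_one, one_smul] at h3
  have h4 : (∫ v, (v * x v - p v) ∂ν) ≤ (0 * x 0 - p 0) + hi := h3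
  linarith

end Mech

end Stmt6Proof

namespace Stmt6Proof
open MeasureTheory Stmt6

lemma conc_hStep {ν : Measure ℝ} [IsProbabilityMeasure ν] {hi : ℝ} (hhi : 0 ≤ hi)
    (hsupp : ∀ᵐ v ∂ν, v ∈ Set.Icc (0:ℝ) hi)
    {g : ℝ → EReal} (hg : Conc g) {M : ℝ} (hgM : ∀ c, g c ≤ (M : EReal)) :
    Conc (hStep ν g) := by
  classical
  have htop : ∀ c, g c < ⊤ := fun c => lt_of_le_of_lt (hgM c) (EReal.coe_lt_top M)
  have hFmeas : Measurable (fun c => (g c).toReal) := conc_measurable hg htop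
  refine conc_of_pos fun c₁ c₂ a b ha hb hab => ?_
  set c : ℝ := a * c₁ + b * c₂ with hcdef
  have claim : ∀ x₁ p₁ x₂ p₂ : ℝ → ℝ,
      (∀ v, x₁ v ∈ Set.Icc (0:ℝ) 1) → (∀ v v', v * x₁ v' - p₁ v' ≤ v * x₁ v - p₁ v) →
      (∫ v, (v * x₁ v - p₁ v) ∂ν) = c₁ →
      (∀ v, x₂ v ∈ Set.Icc (0:ℝ) 1) → (∀ v v', v * x₂ v' - p₂ v' ≤ v * x₂ v - p₂ v) →
      (∫ v, (v * x₂ v - p₂ v) ∂ν) = c₂ →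
      (a : EReal) * hObj ν g c₁ x₁ p₁ + (b : EReal) * hObj ν g c₂ x₂ p₂ ≤ hStep ν g c := by
    intro x₁ p₁ x₂ p₂ hx₁ IC₁ hI₁ hx₂ IC₂ hI₂
    rw [hObj, hObj]
    split_ifs with hcond₁ hcond₂ hcond₂
    rotate_left
    · rw [EReal.coe_mul_bot_of_pos (by exact_mod_cast hb), EReal.add_bot]; exact bot_le
    · rw [EReal.coe_mul_bot_of_pos (by exact_mod_cast ha), EReal.bot_add]; exact bot_le
    · rw [EReal.coe_mul_bot_of_pos (by exact_mod_cast ha), EReal.bot_add]; exact bot_le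
    obtain ⟨hae₁, hint₁⟩ := hcond₁
    obtain ⟨hae₂, hint₂⟩ := hcond₂
    set x : ℝ → ℝ := fun v => a * x₁ v + b * x₂ v with hxdef
    set p : ℝ → ℝ := fun v => a * p₁ v + b * p₂ v with hpdef
    have hue : ∀ v, v * x v - p v = a * (v * x₁ v - p₁ v) + b * (v * x₂ v - p₂ v) := by
      intro v; simp only [hxdef, hpdef]; ring
    have hxm : ∀ v, x v ∈ Set.Icc (0:ℝ) 1 := by
      intro v
      simp only [hxdef, Set.mem_Icc]
      constructor
      · have := (hx₁ v).1; have := (hx₂ v).1; positivity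
      · nlinarith [mul_le_mul_of_nonneg_left (hx₁ v).2 ha.le,
          mul_le_mul_of_nonneg_left (hx₂ v).2 hb.le]
    have ICm : ∀ v v', v * x v' - p v' ≤ v * x v - p v := by
      intro v v'
      have := mul_le_mul_of_nonneg_left (IC₁ v v') ha.le
      have := mul_le_mul_of_nonneg_left (IC₂ v v') hb.le
      simp only [hxdef, hpdef]
      nlinarith
    have hu₁int : Integrable (fun v => v * x₁ v - p₁ v) ν := util_integrable hhi hsupp hx₁ IC₁
    have hu₂int : Integrable (fun v => v * x₂ v - p₂ v) ν := util_integrable hhi hsupp hx₂ IC₂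
    have hIm : (∫ v, (v * x v - p v) ∂ν) = c := by
      have e : (fun v => v * x v - p v)
          = fun v => a * (v * x₁ v - p₁ v) + b * (v * x₂ v - p₂ v) := funext hue
      rw [e, integral_add (hu₁int.const_mul a) (hu₂int.const_mul b),
        integral_const_mul, integral_const_mul, hI₁, hI₂]
    -- a.e. lower bound for g along the combined utility
    have haem : ∀ᵐ v ∂ν,
        ((a * (g (v * x₁ v - p₁ v)).toReal + b * (g (v * x₂ v - p₂ v)).toReal : ℝ) : EReal)
          ≤ g (v * x v - p v) := by
      filter_upwards [hae₁, hae₂] with v hv₁ hv₂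
      have key := hg (v * x₁ v - p₁ v) (v * x₂ v - p₂ v) a b ha.le hb.le hab
      calc ((a * (g (v * x₁ v - p₁ v)).toReal + b * (g (v * x₂ v - p₂ v)).toReal : ℝ) : EReal)
          = (a : EReal) * g (v * x₁ v - p₁ v) + (b : EReal) * g (v * x₂ v - p₂ v) := by
            rw [EReal.coe_add, EReal.coe_mul, EReal.coe_mul,
              EReal.coe_toReal hv₁.2.ne hv₁.1.ne', EReal.coe_toReal hv₂.2.ne hv₂.1.ne']
      _ ≤ g (a * (v * x₁ v - p₁ v) + b * (v * x₂ v - p₂ v)) := key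
      _ = g (v * x v - p v) := by rw [hue v]
    have hum : Measurable (fun v => v * x v - p v) :=
      (util_lipschitz hxm ICm).continuous.measurable
    have hintm : Integrable (fun v => (g (v * x v - p v)).toReal) ν := by
      refine Integrable.mono' ((integrable_const |M|).add (hint₁.abs.add hint₂.abs))
        (hFmeas.comp hum).aestronglyMeasurable ?_
      filter_upwards [haem] with v hv
      have hbot : g (v * x v - p v) ≠ ⊥ :=
        (lt_of_lt_of_le (bot_lt_iff_ne_bot.2 (EReal.coe_ne_bot _)) hv).ne'
      have hup : (g (v * x v - p v)).toReal ≤ M := by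
        have := EReal.toReal_le_toReal (hgM (v * x v - p v)) hbot (EReal.coe_ne_top M)
        rwa [EReal.toReal_coe] at this
      have hlo : a * (g (v * x₁ v - p₁ v)).toReal + b * (g (v * x₂ v - p₂ v)).toReal
          ≤ (g (v * x v - p v)).toReal := by
        have := EReal.toReal_le_toReal hv (EReal.coe_ne_bot _) (htop _).ne
        rwa [EReal.toReal_coe] at this
      rw [Real.norm_eq_abs, abs_le]
      constructor
      · simp only [Pi.add_apply]
        nlinarith [le_abs_self M, neg_abs_le ((g (v * x₁ v - p₁ v)).toReal),
          neg_abs_le ((g (v * x₂ v - p₂ v)).toReal), abs_nonneg M,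
          abs_nonneg ((g (v * x₁ v - p₁ v)).toReal),
          abs_nonneg ((g (v * x₂ v - p₂ v)).toReal)]
      · simp only [Pi.add_apply]
        nlinarith [le_abs_self M, abs_nonneg ((g (v * x₁ v - p₁ v)).toReal),
          abs_nonneg ((g (v * x₂ v - p₂ v)).toReal)]
    have haemb : ∀ᵐ v ∂ν, ⊥ < g (v * x v - p v) ∧ g (v * x v - p v) < ⊤ := by
      filter_upwards [haem] with v hv
      exact ⟨lt_of_lt_of_le (bot_lt_iff_ne_bot.2 (EReal.coe_ne_bot _)) hv, htop _⟩
    have hcondm : (∀ᵐ v ∂ν, ⊥ < g (v * x v - p v) ∧ g (v * x v - p v) < ⊤)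
        ∧ Integrable (fun v => (g (v * x v - p v)).toReal) ν := ⟨haemb, hintm⟩
    -- integral comparison
    have hIcomp : a * (∫ v, (g (v * x₁ v - p₁ v)).toReal ∂ν)
        + b * (∫ v, (g (v * x₂ v - p₂ v)).toReal ∂ν)
        ≤ ∫ v, (g (v * x v - p v)).toReal ∂ν := by
      have hib : Integrable (fun v => a * (g (v * x₁ v - p₁ v)).toReal
          + b * (g (v * x₂ v - p₂ v)).toReal) ν := (hint₁.const_mul a).add (hint₂.const_mul b)
      have hcomp : ∀ᵐ v ∂ν, a * (g (v * x₁ v - p₁ v)).toReal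
          + b * (g (v * x₂ v - p₂ v)).toReal ≤ (g (v * x v - p v)).toReal := by
        filter_upwards [haem] with v hv
        have := EReal.toReal_le_toReal hv (EReal.coe_ne_bot _) (htop _).ne
        rwa [EReal.toReal_coe] at this
      have := integral_mono_ae hib hintm hcomp
      rwa [integral_add (hint₁.const_mul a) (hint₂.const_mul b),
        integral_const_mul, integral_const_mul] at this
    -- the combined mechanism value is in the feasible set for c
    have hmem : hObj ν g c x p ∈ {r : EReal | ∃ x' p' : ℝ → ℝ,
        (∀ v, x' v ∈ Set.Icc (0 : ℝ) 1) ∧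
        (∀ v v', v * x' v' - p' v' ≤ v * x' v - p' v) ∧
        (∫ v, (v * x' v - p' v) ∂ν) = c ∧ r = hObj ν g c x' p'} :=
      ⟨x, p, hxm, ICm, hIm, rfl⟩
    have hle : hObj ν g c x p ≤ hStep ν g c := le_sSup hmem
    have hobjm : hObj ν g c x p
        = ((∫ v, (g (v * x v - p v)).toReal ∂ν + c + p 0 : ℝ) : EReal) := by
      rw [hObj, if_pos hcondm]
    refine le_trans ?_ hle
    rw [hobjm, ← EReal.coe_mul, ← EReal.coe_mul, ← EReal.coe_add, EReal.coe_le_coe_iff]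
    have hp0 : p 0 = a * p₁ 0 + b * p₂ 0 := rfl
    rw [hp0, hcdef]
    ring_nf
    nlinarith [hIcomp]
  -- from the claim to concavity of `hStep`
  refine EReal.add_le_of_forall_lt fun s hs t ht => ?_
  have hs' : s < (a : EReal) * sSup {r : EReal | ∃ x p : ℝ → ℝ,
      (∀ v, x v ∈ Set.Icc (0 : ℝ) 1) ∧ (∀ v v', v * x v' - p v' ≤ v * x v - p v) ∧
      (∫ v, (v * x v - p v) ∂ν) = c₁ ∧ r = hObj ν g c₁ x p} := hs
  have ht' : t < (b : EReal) * sSup {r : EReal | ∃ x p : ℝ → ℝ,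
      (∀ v, x v ∈ Set.Icc (0 : ℝ) 1) ∧ (∀ v v', v * x v' - p v' ≤ v * x v - p v) ∧
      (∫ v, (v * x v - p v) ∂ν) = c₂ ∧ r = hObj ν g c₂ x p} := ht
  obtain ⟨r₁, hr₁, hsr₁⟩ := lt_mul_sSup ha hs'
  obtain ⟨r₂, hr₂, htr₂⟩ := lt_mul_sSup hb ht'
  obtain ⟨x₁, p₁, hx₁, IC₁, hI₁, rfl⟩ := hr₁
  obtain ⟨x₂, p₂, hx₂, IC₂, hI₂, rfl⟩ := hr₂
  calc s + t ≤ (a : EReal) * hObj ν g c₁ x₁ p₁ + (b : EReal) * hObj ν g c₂ x₂ p₂ :=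
        add_le_add hsr₁.le htr₂.le
  _ ≤ hStep ν g c := claim x₁ p₁ x₂ p₂ hx₁ IC₁ hI₁ hx₂ IC₂ hI₂

end Stmt6Proof

namespace Stmt6Proof
open MeasureTheory Stmt6

lemma ae_mem_of_density_zero {f : ℝ → ℝ} {s : Set ℝ} (hs : MeasurableSet s)
    (h0 : ∀ t, t ∉ s → f t = 0) :
    ∀ᵐ v ∂(MeasureTheory.volume.withDensity (fun t => ENNReal.ofReal (f t))), v ∈ s := by
  rw [ae_iff]
  have hset : {a : ℝ | ¬ a ∈ s} = sᶜ := rfl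
  rw [hset, withDensity_apply _ hs.compl]
  rw [setLIntegral_congr_fun hs.compl (fun t ht => by
    rw [h0 t ht, ENNReal.ofReal_zero])]
  simp

section Main
variable {k : ℕ} {h : Fin k → ℝ} {μ : Fin k → Measure ℝ}

lemma hHatAux_le (hh : ∀ i, 0 ≤ h i) (hprob : ∀ i, IsProbabilityMeasure (μ i))
    (hsupp : ∀ i, ∀ᵐ v ∂(μ i), v ∈ Set.Icc 0 (h i)) :
    ∀ m c, hHatAux μ m c ≤ (((m : ℝ) * ∑ j, h j : ℝ) : EReal) := by
  have hH : 0 ≤ ∑ j, h j := Finset.sum_nonneg fun j _ => hh j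
  intro m
  induction m with
  | zero =>
    intro c
    show (if 0 ≤ c then (0 : EReal) else ⊥) ≤ _
    split_ifs
    · exact_mod_cast (by simp : (0:ℝ) ≤ ((0:ℕ) : ℝ) * ∑ j, h j)
    · exact bot_le
  | succ m ih =>
    intro c
    show (if hm : m < k then hStep (μ ⟨k - (m + 1), by omega⟩) (hHatAux μ m) c else ⊥) ≤ _
    split_ifs with hm
    · set i : Fin k := ⟨k - (m + 1), by omega⟩ with hidef
      haveI := hprob i
      refine sSup_le ?_
      rintro r ⟨x, p, hx, IC, hI, rfl⟩
      rw [hObj]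
      split_ifs with hcond
      · obtain ⟨hae, hint⟩ := hcond
        have h1 : ∫ v, (hHatAux μ m (v * x v - p v)).toReal ∂(μ i) ≤ (m : ℝ) * ∑ j, h j := by
          have hb : ∀ᵐ v ∂(μ i),
              (hHatAux μ m (v * x v - p v)).toReal ≤ (m : ℝ) * ∑ j, h j := by
            filter_upwards [hae] with v hv
            have h2 := EReal.toReal_le_toReal (ih (v * x v - p v)) hv.1.ne'
              (EReal.coe_ne_top _)
            rwa [EReal.toReal_coe] at h2
          have h3 := integral_mono_ae hint (integrable_const _) hb
          rw [integral_const] at h3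
          simpa [measure_univ] using h3
        have h2 : c + p 0 ≤ h i := by
          have h4 := util_zero_ge (hh i) (hsupp i) hx IC
          rw [hI] at h4
          nlinarith
        have h3 : h i ≤ ∑ j, h j := Finset.single_le_sum (fun j _ => hh j) (Finset.mem_univ i)
        rw [EReal.coe_le_coe_iff]
        push_cast
        linarith
      · exact bot_le
    · exact bot_le

lemma conc_hHatAux (hh : ∀ i, 0 ≤ h i) (hprob : ∀ i, IsProbabilityMeasure (μ i))
    (hsupp : ∀ i, ∀ᵐ v ∂(μ i), v ∈ Set.Icc 0 (h i)) :
    ∀ m, Conc (hHatAux μ m) := by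
  intro m
  induction m with
  | zero => exact conc_base
  | succ m ih =>
    have heq : hHatAux μ (m + 1) = fun c =>
        if hm : m < k then hStep (μ ⟨k - (m + 1), by omega⟩) (hHatAux μ m) c else ⊥ := rfl
    rw [heq]
    by_cases hm : m < k
    · simp only [hm, dif_pos]
      set i : Fin k := ⟨k - (m + 1), by omega⟩ with hidef
      haveI := hprob i
      exact conc_hStep (hh i) (hsupp i) ih
        (fun c => hHatAux_le hh hprob hsupp m c)
    · simp only [hm, dif_neg, not_false_iff]
      intro c₁ c₂ a b ha hb hab
      rcases ha.eq_or_lt with rfl | ha'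
      · have hb1 : b = 1 := by linarith
        subst hb1; simp
      · rw [EReal.coe_mul_bot_of_pos (by exact_mod_cast ha'), EReal.bot_add]

end Main
end Stmt6Proof

open Stmt6 in
/-- **Lemma 3.8**: each cumulative tradeoff function `ĥ_i` is concave (as an
extended-real-valued function). -/
theorem stmt_6 {k : ℕ} (h : Fin k → ℝ) (hh : ∀ i, 0 ≤ h i)
    (f : Fin k → ℝ → ℝ) (hf : ∀ i t, 0 ≤ f i t)
    (hfsupp : ∀ i t, t ∉ Set.Icc 0 (h i) → f i t = 0)
    (μ : Fin k → Measure ℝ)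
    (hμ : ∀ i, μ i = MeasureTheory.volume.withDensity (fun t => ENNReal.ofReal (f i t)))
    (hprob : ∀ i, IsProbabilityMeasure (μ i)) :
    ∀ i : ℕ, i ≤ k → ∀ (c₁ c₂ a b : ℝ), 0 ≤ a → 0 ≤ b → a + b = 1 →
      (a : EReal) * hHat μ i c₁ + (b : EReal) * hHat μ i c₂
        ≤ hHat μ i (a * c₁ + b * c₂) := by

  have hsupp : ∀ i, ∀ᵐ v ∂(μ i), v ∈ Set.Icc 0 (h i) := by
    intro i
    rw [hμ i]
    exact Stmt6Proof.ae_mem_of_density_zero measurableSet_Icc (hfsupp i)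
  have hconc := Stmt6Proof.conc_hHatAux hh hprob hsupp
  intro i hi c₁ c₂ a b ha hb hab
  exact hconc (k - i) c₁ c₂ a b ha hb hab
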